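/- Let φ be the sigmoid function. For every u ∈ ℝ and every ε > 0, there exist c > 0 and σ₀ > 0 such that for all σ ≥ σ₀: β₂(u,σ) − α₂(u,σ)²/(u² + 1) ≥ c · σ^{−(3+ε)}, i.e., E_{z∼N(u,1)}[φ'(σ·z)²·z²] − (E_{z∼N(u,1)}[φ'(σ·z)·z²])²/(u²+1) ≥ c·σ^{−(3+ε)}. -/

import Mathlib

open MeasureTheory ProbabilityTheory

/-- The sigmoid function `φ(x) = 1/(1 + exp(−x))`. -/
noncomputable def phi (x : ℝ) : ℝ := 1 / (1 + Real.exp (-x))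

/-- The derivative of the sigmoid, `φ' = φ(1−φ)`. -/
noncomputable def phi' (x : ℝ) : ℝ := phi x * (1 - phi x)

/-- `α_q(u,σ) = E_{z∼N(u,1)}[φ'(σ·z)·z^q]`. -/
noncomputable def alphaQ (q : ℕ) (u σ : ℝ) : ℝ :=
  ∫ z, phi' (σ * z) * z ^ q ∂(gaussianReal u 1)

/-- `β_q(u,σ) = E_{z∼N(u,1)}[φ'(σ·z)²·z^q]`. -/
noncomputable def betaQ (q : ℕ) (u σ : ℝ) : ℝ :=
  ∫ z, (phi' (σ * z)) ^ 2 * z ^ q ∂(gaussianReal u 1)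

lemma phi'_eq (x : ℝ) : phi' x = 1 / (2 + Real.exp x + Real.exp (-x)) := by
  have h1 : Real.exp (-x) > 0 := Real.exp_pos _
  have h2 : Real.exp x > 0 := Real.exp_pos _
  have hx : Real.exp x * Real.exp (-x) = 1 := by
    rw [← Real.exp_add]; simp
  unfold phi' phi
  have hne : (1 : ℝ) + Real.exp (-x) ≠ 0 := by positivity
  have hne2 : (2 : ℝ) + Real.exp x + Real.exp (-x) ≠ 0 := by positivity
  field_simp
  ring_nf
  nlinarith [hx]

lemma phi'_pos (x : ℝ) : 0 < phi' x := by
  rw [phi'_eq]; positivity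

lemma phi'_le_one (x : ℝ) : phi' x ≤ 1 := by
  rw [phi'_eq]
  rw [div_le_one (by positivity)]
  nlinarith [Real.exp_pos x, Real.exp_pos (-x)]

lemma phi'_le_exp (x : ℝ) : phi' x ≤ Real.exp (-|x|) := by
  rw [phi'_eq]
  rw [div_le_iff₀ (by positivity)]
  have key : Real.exp (-|x|) * Real.exp |x| = 1 := by rw [← Real.exp_add]; simp
  have hle : Real.exp |x| ≤ 2 + Real.exp x + Real.exp (-x) := by
    rcases abs_cases x with ⟨h, _⟩ | ⟨h, _⟩ <;> rw [h] <;>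
      nlinarith [Real.exp_pos x, Real.exp_pos (-x)]
  nlinarith [Real.exp_pos (-|x|)]

lemma phi'_ge_of_abs_le_one {x : ℝ} (h : |x| ≤ 1) : phi' 1 ≤ phi' x := by
  rw [phi'_eq, phi'_eq]
  have h1 : Real.exp x + Real.exp (-x) ≤ Real.exp 1 + Real.exp (-1) := by
    have hc : ∀ y : ℝ, Real.exp y + Real.exp (-y) = 2 * Real.cosh y := by
      intro y; rw [Real.cosh_eq]; ring
    rw [hc, hc]
    have := Real.cosh_abs x
    have h2 : Real.cosh x ≤ Real.cosh 1 := by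
      rw [← Real.cosh_abs]
      exact Real.cosh_le_cosh.mpr (by simpa using h)
    linarith
  apply div_le_div_of_nonneg_left one_pos.le (by positivity)
  linarith

lemma sq_exp_le (s : ℝ) (hs : 0 ≤ s) : s ^ 2 * Real.exp (-s) ≤ 4 * Real.exp (-2) := by
  have key : s / 2 ≤ Real.exp ((s - 2) / 2) := by
    have := Real.add_one_le_exp ((s - 2) / 2)
    linarith
  have h2 : (s / 2) ^ 2 ≤ Real.exp ((s - 2) / 2) ^ 2 := by
    apply sq_le_sq' _ key
    nlinarith [Real.exp_pos ((s - 2) / 2)]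
  have h3 : Real.exp ((s - 2) / 2) ^ 2 = Real.exp (s - 2) := by
    rw [sq, ← Real.exp_add]; ring_nf
  rw [h3] at h2
  have h4 : Real.exp (s - 2) = Real.exp s * Real.exp (-2) := by
    rw [← Real.exp_add]; ring_nf
  have h5 : Real.exp (-s) = (Real.exp s)⁻¹ := by rw [← Real.exp_neg]
  rw [h5]
  have hes : 0 < Real.exp s := Real.exp_pos s
  rw [h4] at h2
  calc s ^ 2 * (Real.exp s)⁻¹ ≤ (4 * (Real.exp s * Real.exp (-2))) * (Real.exp s)⁻¹ := by
        apply mul_le_mul_of_nonneg_right (by nlinarith) (by positivity)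
    _ = 4 * Real.exp (-2) := by field_simp

lemma continuous_phi' : Continuous phi' := by
  have h : Continuous phi := by
    apply continuous_const.div (by continuity)
    intro x
    positivity
  exact h.mul (continuous_const.sub h)

lemma pointwise_bound (σ z : ℝ) (hσ : 0 < σ) :
    phi' (σ * z) * z ^ 2 ≤ 4 * Real.exp (-2) / σ ^ 2 := by
  have h1 : phi' (σ * z) * z ^ 2 ≤ Real.exp (-|σ * z|) * z ^ 2 :=
    mul_le_mul_of_nonneg_right (phi'_le_exp _) (sq_nonneg z)
  have h2 : |σ * z| ^ 2 * Real.exp (-|σ * z|) ≤ 4 * Real.exp (-2) := sq_exp_le _ (abs_nonneg _)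
  have h3 : |σ * z| ^ 2 = σ ^ 2 * z ^ 2 := by rw [abs_mul, mul_pow, sq_abs, sq_abs]
  rw [h3] at h2
  have h4 : Real.exp (-|σ * z|) * z ^ 2 ≤ 4 * Real.exp (-2) / σ ^ 2 := by
    rw [le_div_iff₀ (by positivity)]
    nlinarith [Real.exp_pos (-|σ * z|)]
  linarith

lemma f_nonneg (σ z : ℝ) : 0 ≤ phi' (σ * z) * z ^ 2 :=
  mul_nonneg (phi'_pos _).le (sq_nonneg z)

lemma f2_nonneg (σ z : ℝ) : 0 ≤ (phi' (σ * z)) ^ 2 * z ^ 2 :=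
  mul_nonneg (sq_nonneg _) (sq_nonneg z)

lemma f2_le_f (σ z : ℝ) : (phi' (σ * z)) ^ 2 * z ^ 2 ≤ phi' (σ * z) * z ^ 2 := by
  apply mul_le_mul_of_nonneg_right _ (sq_nonneg z)
  nlinarith [phi'_pos (σ * z), phi'_le_one (σ * z)]

lemma integrable_f (u σ : ℝ) (hσ : 0 < σ) :
    Integrable (fun z => phi' (σ * z) * z ^ 2) (gaussianReal u 1) := by
  apply Integrable.mono' (integrable_const (4 * Real.exp (-2) / σ ^ 2))
    (((continuous_phi'.comp (continuous_const.mul continuous_id)).mul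
      (continuous_pow 2)).aestronglyMeasurable)
  refine ae_of_all _ fun z => ?_
  show ‖phi' (σ * z) * z ^ 2‖ ≤ _
  rw [Real.norm_eq_abs, abs_of_nonneg (f_nonneg σ z)]
  exact pointwise_bound σ z hσ

lemma integrable_f2 (u σ : ℝ) (hσ : 0 < σ) :
    Integrable (fun z => (phi' (σ * z)) ^ 2 * z ^ 2) (gaussianReal u 1) := by
  apply Integrable.mono' (integrable_f u σ hσ)
    ((((continuous_phi'.comp (continuous_const.mul continuous_id)).pow 2).mul
      (continuous_pow 2)).aestronglyMeasurable)
  refine ae_of_all _ fun z => ?_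
  show ‖(phi' (σ * z)) ^ 2 * z ^ 2‖ ≤ _
  rw [Real.norm_eq_abs, abs_of_nonneg (f2_nonneg σ z)]
  exact f2_le_f σ z

lemma alpha_nonneg (u σ : ℝ) : 0 ≤ alphaQ 2 u σ :=
  integral_nonneg fun z => f_nonneg σ z

lemma alpha_le (u σ : ℝ) (hσ : 0 < σ) : alphaQ 2 u σ ≤ 4 * Real.exp (-2) / σ ^ 2 := by
  have : alphaQ 2 u σ ≤ ∫ _, 4 * Real.exp (-2) / σ ^ 2 ∂(gaussianReal u 1) :=
    integral_mono (integrable_f u σ hσ) (integrable_const _) fun z => pointwise_bound σ z hσ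
  simpa using this

noncomputable def mconst (u : ℝ) : ℝ := (Real.sqrt (2 * Real.pi))⁻¹ * Real.exp (-(1 + |u|) ^ 2 / 2)

lemma mconst_pos (u : ℝ) : 0 < mconst u := by
  unfold mconst
  have := Real.pi_pos
  positivity

lemma beta_ge (u σ : ℝ) (hσ : 1 ≤ σ) :
    (phi' 1) ^ 2 * mconst u / 8 / σ ^ 3 ≤ betaQ 2 u σ := by
  have hσ0 : 0 < σ := lt_of_lt_of_le one_pos hσ
  set μ := gaussianReal u 1 with hμ
  set s : Set ℝ := Set.Icc (1 / (2 * σ)) (1 / σ) with hs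
  have hmeas : MeasurableSet s := measurableSet_Icc
  -- measure of s lower bound
  have hpdf : ∀ x ∈ s, mconst u ≤ gaussianPDFReal u 1 x := by
    intro x hx
    obtain ⟨hx1, hx2⟩ := hx
    have hx0 : 0 ≤ x := le_trans (by positivity) hx1
    have hxle : x ≤ 1 := le_trans hx2 (by rw [div_le_one hσ0]; exact hσ)
    simp only [gaussianPDFReal, NNReal.coe_one, mul_one]
    unfold mconst
    apply mul_le_mul_of_nonneg_left _ (by positivity)
    apply Real.exp_le_exp.mpr
    have h1 : (x - u) ^ 2 ≤ (1 + |u|) ^ 2 := by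
      nlinarith [neg_abs_le u, le_abs_self u, abs_nonneg u]
    linarith
  have hint : mconst u * (1 / (2 * σ)) ≤ ∫ x in s, gaussianPDFReal u 1 x := by
    have h1 : ∫ x in s, mconst u ≤ ∫ x in s, gaussianPDFReal u 1 x := by
      apply setIntegral_mono_on
      · exact integrableOn_const measure_Icc_lt_top.ne
      · exact (integrable_gaussianPDFReal u 1).integrableOn
      · exact hmeas
      · exact hpdf
    have h2 : ∫ x in s, mconst u = mconst u * (1 / (2 * σ)) := by
      rw [setIntegral_const, hs, measureReal_def, Real.volume_Icc, ENNReal.toReal_ofReal (by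
        rw [sub_nonneg]; apply div_le_div_of_nonneg_left one_pos.le hσ0; nlinarith)]
      rw [smul_eq_mul]
      field_simp
      ring
    linarith [h2 ▸ h1]
  have hμs : mconst u * (1 / (2 * σ)) ≤ (μ s).toReal := by
    rw [hμ, gaussianReal_apply_eq_integral u one_ne_zero s,
      ENNReal.toReal_ofReal (setIntegral_nonneg hmeas fun x _ => gaussianPDFReal_nonneg u 1 x)]
    exact hint
  -- set integral lower bound
  have hstep1 : ∫ z in s, (phi' (σ * z)) ^ 2 * z ^ 2 ∂μ ≤ betaQ 2 u σ := by
    exact setIntegral_le_integral (integrable_f2 u σ hσ0) (ae_of_all _ fun z => f2_nonneg σ z)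
  have hstep2 : (phi' 1) ^ 2 * (1 / (2 * σ)) ^ 2 * (μ s).toReal
      ≤ ∫ z in s, (phi' (σ * z)) ^ 2 * z ^ 2 ∂μ := by
    have h1 : ∫ z in s, (phi' 1) ^ 2 * (1 / (2 * σ)) ^ 2 ∂μ
        ≤ ∫ z in s, (phi' (σ * z)) ^ 2 * z ^ 2 ∂μ := by
      apply setIntegral_mono_on
      · exact integrableOn_const (measure_lt_top _ _).ne
      · exact (integrable_f2 u σ hσ0).integrableOn
      · exact hmeas
      · intro z hz
        obtain ⟨hz1, hz2⟩ := hz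
        have hz0 : 0 < z := lt_of_lt_of_le (by positivity) hz1
        have habs : |σ * z| ≤ 1 := by
          rw [abs_of_nonneg (by positivity)]
          calc σ * z ≤ σ * (1 / σ) := by nlinarith
            _ = 1 := by field_simp
        have hphi : phi' 1 ≤ phi' (σ * z) := phi'_ge_of_abs_le_one habs
        apply mul_le_mul
        · exact pow_le_pow_left₀ (phi'_pos 1).le hphi 2
        · apply pow_le_pow_left₀ (by positivity) hz1 2
        · positivity
        · exact sq_nonneg _
    rw [setIntegral_const, smul_eq_mul, mul_comm] at h1
    exact h1
  have hfinal : (phi' 1) ^ 2 * mconst u / 8 / σ ^ 3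
      ≤ (phi' 1) ^ 2 * (1 / (2 * σ)) ^ 2 * (μ s).toReal := by
    have heq : (phi' 1) ^ 2 * (1 / (2 * σ)) ^ 2 * (mconst u * (1 / (2 * σ)))
        = (phi' 1) ^ 2 * mconst u / 8 / σ ^ 3 := by
      field_simp
      ring_nf
    calc (phi' 1) ^ 2 * mconst u / 8 / σ ^ 3
        = (phi' 1) ^ 2 * (1 / (2 * σ)) ^ 2 * (mconst u * (1 / (2 * σ))) := heq.symm
      _ ≤ (phi' 1) ^ 2 * (1 / (2 * σ)) ^ 2 * (μ s).toReal := by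
          apply mul_le_mul_of_nonneg_left hμs (by positivity)
  linarith

theorem stmt_10 (u : ℝ) (ε : ℝ) (hε : 0 < ε) :
    ∃ c > 0, ∃ σ₀ > 0, ∀ σ : ℝ, σ₀ ≤ σ →
      betaQ 2 u σ - (alphaQ 2 u σ) ^ 2 / (u ^ 2 + 1) ≥ c * σ ^ (-(3 + ε)) := by
  set m := mconst u with hm
  set c₁ := (phi' 1) ^ 2 * m / 8 with hc₁
  have hc₁pos : 0 < c₁ := by
    have h1 := mconst_pos u
    have h2 := phi'_pos 1
    rw [hc₁, hm]
    positivity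
  set C := 4 * Real.exp (-2) with hC
  have hCpos : 0 < C := by rw [hC]; positivity
  have hu : (0:ℝ) < u ^ 2 + 1 := by positivity
  refine ⟨c₁ / 2, by positivity, max 1 (2 * C ^ 2 / (c₁ * (u ^ 2 + 1))),
    lt_of_lt_of_le one_pos (le_max_left _ _), fun σ hσ => ?_⟩
  have hσ1 : 1 ≤ σ := le_trans (le_max_left _ _) hσ
  have hσ0 : 0 < σ := by linarith
  have hbig : 2 * C ^ 2 / (c₁ * (u ^ 2 + 1)) ≤ σ := le_trans (le_max_right _ _) hσ
  have hβ : c₁ / σ ^ 3 ≤ betaQ 2 u σ := beta_ge u σ hσ1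
  have hα : alphaQ 2 u σ ≤ C / σ ^ 2 := alpha_le u σ hσ0
  have hα0 := alpha_nonneg u σ
  have hα2 : (alphaQ 2 u σ) ^ 2 ≤ C ^ 2 / σ ^ 4 := by
    calc (alphaQ 2 u σ) ^ 2 ≤ (C / σ ^ 2) ^ 2 := pow_le_pow_left₀ hα0 hα 2
      _ = C ^ 2 / σ ^ 4 := by rw [div_pow]; ring_nf
  have hkey : (alphaQ 2 u σ) ^ 2 / (u ^ 2 + 1) ≤ (c₁ / 2) / σ ^ 3 := by
    have h1 : (alphaQ 2 u σ) ^ 2 / (u ^ 2 + 1) ≤ C ^ 2 / σ ^ 4 / (u ^ 2 + 1) := by gcongr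
    have h2 : C ^ 2 / σ ^ 4 / (u ^ 2 + 1) ≤ (c₁ / 2) / σ ^ 3 := by
      rw [div_div, div_le_div_iff₀ (by positivity) (by positivity)]
      have h3 : 2 * C ^ 2 ≤ c₁ * (u ^ 2 + 1) * σ := by
        rw [div_le_iff₀ (by positivity)] at hbig
        linarith
      nlinarith [mul_le_mul_of_nonneg_left h3 (pow_pos hσ0 3).le]
    linarith
  have hr : σ ^ (-(3 + ε)) ≤ σ ^ (-3 : ℝ) :=
    Real.rpow_le_rpow_of_exponent_le hσ1 (by linarith)
  have hr2 : σ ^ (-3 : ℝ) = (σ ^ 3)⁻¹ := by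
    rw [Real.rpow_neg hσ0.le, show (3:ℝ) = ((3:ℕ):ℝ) by norm_num, Real.rpow_natCast]
  rw [ge_iff_le]
  calc c₁ / 2 * σ ^ (-(3 + ε)) ≤ c₁ / 2 * σ ^ (-3 : ℝ) := by
        apply mul_le_mul_of_nonneg_left hr (by positivity)
    _ = (c₁ / 2) / σ ^ 3 := by rw [hr2]; ring
    _ ≤ betaQ 2 u σ - (alphaQ 2 u σ) ^ 2 / (u ^ 2 + 1) := by
        have hh : c₁ / 2 / σ ^ 3 + c₁ / 2 / σ ^ 3 = c₁ / σ ^ 3 := by ring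
        linarith
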